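/- (Generalized Gronwall inequality with weakly singular kernel.) Let β ∈ (1/2, 1), a ≥ 0, b ≥ 0, and let φ : [0, u] → ℝ be nonnegative, bounded, and measurable satisfying φ(t) ≤ a + b·∫₀ᵗ (t-s)^{(2β-1)-1} φ(s) ds for all t ∈ [0, u]. Then φ(t) ≤ a·∑_{k=0}^∞ (b·Γ(2β-1))^k · t^{k(2β-1)} / Γ(k(2β-1)+1) for all t ∈ [0, u]; in particular φ(t) ≤ a·E_{2β-1}(b·Γ(2β-1)·t^{2β-1}), where E_γ is the Mittag-Leffler function. -/

import Mathlib

open Real MeasureTheory intervalIntegral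

set_option maxHeartbeats 1600000

lemma ofReal_intervalIntegral (f : ℝ → ℝ) (a b : ℝ) :
    (∫ x in a..b, ((f x : ℝ) : ℂ)) = ((∫ x in a..b, f x : ℝ) : ℂ) :=
  RCLike.intervalIntegral_ofReal

lemma real_beta (p q : ℝ) (hp : 0 < p) (hq : 0 < q) :
    ∫ x in (0:ℝ)..1, x ^ (p-1) * (1-x) ^ (q-1)
      = Real.Gamma p * Real.Gamma q / Real.Gamma (p+q) := by
  have hpq : 0 < p + q := by linarith
  have hG : (0:ℝ) < Real.Gamma (p+q) := Real.Gamma_pos_of_pos hpq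
  have key := Complex.Gamma_mul_Gamma_eq_betaIntegral
    (s := (p:ℂ)) (t := (q:ℂ)) (by simpa using hp) (by simpa using hq)
  have hbeta : Complex.betaIntegral p q
      = ((∫ x in (0:ℝ)..1, x ^ (p-1) * (1-x) ^ (q-1) : ℝ) : ℂ) := by
    rw [Complex.betaIntegral, ← ofReal_intervalIntegral]
    apply intervalIntegral.integral_congr
    intro x hx
    rw [Set.uIcc_of_le (by norm_num : (0:ℝ) ≤ 1)] at hx
    obtain ⟨hx0, hx1⟩ := hx
    simp only []
    rw [Complex.ofReal_mul, Complex.ofReal_cpow hx0,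
      Complex.ofReal_cpow (by linarith : (0:ℝ) ≤ 1 - x)]
    push_cast
    ring
  rw [hbeta, ← Complex.ofReal_add, Complex.Gamma_ofReal, Complex.Gamma_ofReal,
    Complex.Gamma_ofReal, ← Complex.ofReal_mul, ← Complex.ofReal_mul] at key
  have h2 : Real.Gamma p * Real.Gamma q
      = Real.Gamma (p+q) * ∫ x in (0:ℝ)..1, x ^ (p-1) * (1-x) ^ (q-1) :=
    Complex.ofReal_inj.mp key
  field_simp
  linarith [h2]

lemma J_formula (γ δ t : ℝ) (hγ0 : 0 < γ) (hδ : 0 ≤ δ) (ht : 0 ≤ t) :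
    ∫ s in (0:ℝ)..t, (t-s) ^ (γ-1) * s ^ δ
      = (Real.Gamma γ * Real.Gamma (δ+1) / Real.Gamma (γ+δ+1)) * t ^ (γ+δ) := by
  rcases ht.eq_or_lt with h | h
  · rw [← h]
    simp [Real.zero_rpow (by positivity : γ + δ ≠ 0)]
  · have htne : t ≠ 0 := ne_of_gt h
    have comp := intervalIntegral.integral_comp_mul_left
      (f := fun s => (t-s) ^ (γ-1) * s ^ δ) (a := 0) (b := 1) (c := t) htne
    simp only [mul_zero, mul_one, smul_eq_mul] at comp
    have h1 : ∫ x in (0:ℝ)..1, (t - t*x) ^ (γ-1) * (t*x) ^ δ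
        = t ^ (γ-1) * t ^ δ * ∫ x in (0:ℝ)..1, x ^ ((δ+1)-1) * (1-x) ^ (γ-1) := by
      rw [← intervalIntegral.integral_const_mul]
      apply intervalIntegral.integral_congr
      intro x hx
      rw [Set.uIcc_of_le (by norm_num : (0:ℝ) ≤ 1)] at hx
      obtain ⟨hx0, hx1⟩ := hx
      simp only []
      have e1 : t - t*x = t * (1-x) := by ring
      rw [e1, Real.mul_rpow ht (by linarith), Real.mul_rpow ht hx0]
      have : δ + 1 - 1 = δ := by ring
      rw [this]
      ring
    have h2 : ∫ x in (0:ℝ)..1, x ^ ((δ+1)-1) * (1-x) ^ (γ-1)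
        = Real.Gamma (δ+1) * Real.Gamma γ / Real.Gamma (δ+1+γ) :=
      real_beta (δ+1) γ (by linarith) hγ0
    have h3 : ∫ s in (0:ℝ)..t, (t-s) ^ (γ-1) * s ^ δ
        = t * ∫ x in (0:ℝ)..1, (t - t*x) ^ (γ-1) * (t*x) ^ δ := by
      rw [comp]
      field_simp
    rw [h3, h1, h2]
    have e2 : t * (t ^ (γ-1) * t ^ δ) = t ^ (γ+δ) := by
      have e : γ + δ = 1 + (γ-1) + δ := by ring
      rw [e, Real.rpow_add h, Real.rpow_add h, Real.rpow_one]; ring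
    have e3 : δ + 1 + γ = γ + δ + 1 := by ring
    rw [e3]
    calc t * (t ^ (γ-1) * t ^ δ * (Real.Gamma (δ+1) * Real.Gamma γ / Real.Gamma (γ+δ+1)))
        = (Real.Gamma γ * Real.Gamma (δ+1) / Real.Gamma (γ+δ+1)) * (t * (t ^ (γ-1) * t ^ δ)) := by
          ring
      _ = _ := by rw [e2]

lemma intInt_kernel (γ t : ℝ) (hγ0 : 0 < γ) :
    IntervalIntegrable (fun s => (t-s) ^ (γ-1)) volume 0 t := by
  have h1 : IntervalIntegrable (fun x : ℝ => x ^ (γ-1)) volume 0 t :=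
    intervalIntegral.intervalIntegrable_rpow' (by linarith)
  have h2 := h1.comp_sub_left t
  simpa using h2.symm

lemma intInt_mul (γ t : ℝ) (hγ0 : 0 < γ) (ht : 0 ≤ t) (g : ℝ → ℝ)
    (hg : Measurable g) (C : ℝ) (hC : ∀ s ∈ Set.Icc (0:ℝ) t, |g s| ≤ C) :
    IntervalIntegrable (fun s => (t-s) ^ (γ-1) * g s) volume 0 t := by
  apply IntervalIntegrable.mono_fun' ((intInt_kernel γ t hγ0).const_mul C)
  · exact ((measurable_const.sub measurable_id).pow_const (γ-1)).aestronglyMeasurable.mul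
      hg.aestronglyMeasurable
  · rw [Set.uIoc_of_le ht]
    filter_upwards [ae_restrict_mem measurableSet_Ioc] with s hs
    have hs0 : 0 ≤ s := le_of_lt hs.1
    have hst : s ≤ t := hs.2
    have hk : (0:ℝ) ≤ (t-s) ^ (γ-1) := Real.rpow_nonneg (by linarith) _
    have := hC s ⟨hs0, hst⟩
    calc ‖(t-s) ^ (γ-1) * g s‖ = (t-s) ^ (γ-1) * |g s| := by
          rw [norm_mul, Real.norm_eq_abs, Real.norm_eq_abs, abs_of_nonneg hk]
      _ ≤ C * (t-s) ^ (γ-1) := by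
          rw [mul_comm]
          exact mul_le_mul_of_nonneg_right this hk

lemma summable_ml (γ X : ℝ) (hγ0 : 0 < γ) (hX : 0 ≤ X) :
    Summable (fun k : ℕ => X ^ k / Real.Gamma ((k:ℝ) * γ + 1)) := by
  set Y : ℝ := max 1 (X ^ γ⁻¹) with hYdef
  have hY1 : (1:ℝ) ≤ Y := le_max_left _ _
  have hY0 : (0:ℝ) < Y := lt_of_lt_of_le one_pos hY1
  have hXY : X ≤ Y ^ γ := by
    calc X = (X ^ γ⁻¹) ^ γ := by
          rw [← Real.rpow_mul hX, inv_mul_cancel₀ hγ0.ne', Real.rpow_one]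
      _ ≤ Y ^ γ := Real.rpow_le_rpow (Real.rpow_nonneg hX _) (le_max_right _ _) hγ0.le
  obtain ⟨C₂, hC₂⟩ := (Real.summable_pow_div_factorial (2*Y)).tendsto_atTop_zero.bddAbove_range
  have hC₂' : ∀ n : ℕ, (2*Y) ^ n / (n.factorial : ℝ) ≤ C₂ := fun n =>
    hC₂ (Set.mem_range_self n)
  have hC₂0 : 0 ≤ C₂ := le_trans (by positivity) (hC₂' 0)
  set r : ℝ := (1/2 : ℝ) ^ γ with hrdef
  have hr0 : 0 ≤ r := Real.rpow_nonneg (by norm_num) _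
  have hr1 : r < 1 := Real.rpow_lt_one (by norm_num) (by norm_num) hγ0
  set K : ℕ := ⌈2/γ⌉₊ with hKdef
  -- the key pointwise bound for k ≥ K
  have key : ∀ k : ℕ, K ≤ k → X ^ k / Real.Gamma ((k:ℝ) * γ + 1) ≤ (2*Y*C₂) * r ^ k := by
    intro k hk
    set x : ℝ := (k:ℝ) * γ with hxdef
    have hx0 : 0 ≤ x := by positivity
    have hx2 : 2 ≤ x := by
      have h1 : 2/γ ≤ (K:ℝ) := Nat.le_ceil _
      have h2 : (K:ℝ) ≤ (k:ℝ) := Nat.cast_le.mpr hk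
      have := (div_le_iff₀ hγ0).mp (le_trans h1 h2)
      linarith [this]
    set n : ℕ := ⌊x⌋₊ with hndef
    have hn2 : 2 ≤ n := Nat.le_floor (by exact_mod_cast hx2)
    have hnx : (n:ℝ) ≤ x := Nat.floor_le hx0
    have hxn1 : x ≤ (n:ℝ) + 1 := (Nat.lt_floor_add_one x).le
    have hfac : (n.factorial : ℝ) ≤ Real.Gamma (x + 1) := by
      have := Real.Gamma_strictMonoOn_Ici.monotoneOn
        (Set.mem_Ici.mpr (by exact_mod_cast by linarith : (2:ℝ) ≤ (n:ℝ) + 1))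
        (Set.mem_Ici.mpr (by linarith : (2:ℝ) ≤ x + 1))
        (by linarith)
      rwa [Real.Gamma_nat_eq_factorial] at this
    have hfac0 : (0:ℝ) < (n.factorial : ℝ) := by positivity
    have hG0 : (0:ℝ) < Real.Gamma (x + 1) := Real.Gamma_pos_of_pos (by linarith)
    have hXk : X ^ k ≤ Y * Y ^ n := by
      calc X ^ k = X ^ (k:ℝ) := (Real.rpow_natCast X k).symm
        _ ≤ (Y ^ γ) ^ (k:ℝ) := Real.rpow_le_rpow hX hXY (by positivity)
        _ = Y ^ x := by rw [← Real.rpow_mul hY0.le, hxdef, mul_comm]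
        _ ≤ Y ^ ((n:ℝ) + 1) := Real.rpow_le_rpow_of_exponent_le hY1 hxn1
        _ = Y ^ (n + 1 : ℕ) := by
            rw [show ((n:ℝ) + 1) = ((n + 1 : ℕ) : ℝ) by push_cast; ring, Real.rpow_natCast]
        _ = Y * Y ^ n := by ring
    have hYn : Y ^ n / (n.factorial : ℝ) ≤ C₂ * (1/2:ℝ) ^ n := by
      have e : Y ^ n = (2*Y) ^ n * (1/2:ℝ) ^ n := by
        have h' : 2*Y*(1/2:ℝ) = Y := by ring
        rw [← mul_pow, h']
      rw [e]
      rw [div_eq_mul_inv, mul_right_comm, ← div_eq_mul_inv]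
      exact mul_le_mul_of_nonneg_right (hC₂' n) (by positivity)
    have hhalf : ((1:ℝ)/2) ^ n ≤ 2 * r ^ k := by
      calc ((1:ℝ)/2) ^ n = (1/2:ℝ) ^ (n:ℝ) := (Real.rpow_natCast _ n).symm
        _ ≤ (1/2:ℝ) ^ (x - 1) := by
            apply Real.rpow_le_rpow_of_exponent_ge (by norm_num) (by norm_num)
            linarith
        _ = 2 * (1/2:ℝ) ^ x := by
            rw [Real.rpow_sub (by norm_num), Real.rpow_one]
            ring
        _ = 2 * r ^ k := by
            rw [hrdef, ← Real.rpow_natCast ((1/2:ℝ)^γ) k, ← Real.rpow_mul (by norm_num),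
              mul_comm γ (k:ℝ)]
    calc X ^ k / Real.Gamma (x + 1) ≤ (Y * Y ^ n) / (n.factorial : ℝ) := by
          apply div_le_div₀ (by positivity) hXk hfac0 hfac
      _ = Y * (Y ^ n / (n.factorial : ℝ)) := by ring
      _ ≤ Y * (C₂ * (1/2:ℝ) ^ n) := by
          apply mul_le_mul_of_nonneg_left hYn hY0.le
      _ ≤ Y * (C₂ * (2 * r ^ k)) := by
          apply mul_le_mul_of_nonneg_left _ hY0.le
          exact mul_le_mul_of_nonneg_left hhalf hC₂0
      _ = (2*Y*C₂) * r ^ k := by ring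
  -- conclude
  rw [← summable_nat_add_iff K]
  refine Summable.of_nonneg_of_le (fun n => by positivity) (fun n => ?_)
    ((summable_geometric_of_lt_one hr0 hr1).mul_left ((2*Y*C₂) * r ^ K))
  have hkey := key (n + K) (Nat.le_add_left K n)
  calc X ^ (n+K) / Real.Gamma (((n+K : ℕ):ℝ) * γ + 1) ≤ (2*Y*C₂) * r ^ (n+K) := hkey
    _ = ((2*Y*C₂) * r ^ K) * r ^ n := by rw [pow_add]; ring

noncomputable def mlterm (c γ : ℝ) (k : ℕ) (t : ℝ) : ℝ :=
  c ^ k * t ^ ((k:ℝ) * γ) / Real.Gamma ((k:ℝ) * γ + 1)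

lemma mlterm_zero (c γ t : ℝ) : mlterm c γ 0 t = 1 := by
  simp [mlterm, Real.Gamma_one]

lemma mlterm_nonneg (c γ : ℝ) (k : ℕ) (t : ℝ) (hc : 0 ≤ c) (ht : 0 ≤ t) (hγ : 0 < γ) :
    0 ≤ mlterm c γ k t := by
  have h : 0 < Real.Gamma ((k:ℝ) * γ + 1) := Real.Gamma_pos_of_pos (by positivity)
  have h2 : (0:ℝ) ≤ t ^ ((k:ℝ) * γ) := Real.rpow_nonneg ht _
  have h3 : (0:ℝ) ≤ c ^ k := pow_nonneg hc k
  unfold mlterm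
  positivity

lemma mlterm_mono (c γ : ℝ) (k : ℕ) (s t : ℝ) (hc : 0 ≤ c) (hs : 0 ≤ s) (hst : s ≤ t)
    (hγ : 0 < γ) : mlterm c γ k s ≤ mlterm c γ k t := by
  have h : 0 < Real.Gamma ((k:ℝ) * γ + 1) := Real.Gamma_pos_of_pos (by positivity)
  unfold mlterm
  have h3 : (0:ℝ) ≤ c ^ k := pow_nonneg hc k
  gcongr


lemma mlterm_measurable (c γ : ℝ) (k : ℕ) : Measurable (fun t => mlterm c γ k t) := by
  unfold mlterm
  exact ((measurable_const.mul (measurable_id.pow_const ((k:ℝ) * γ)))).div measurable_const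

theorem gronwall_aux (γ u a b M : ℝ) (hγ0 : 0 < γ) (hγ1 : γ < 1)
    (ha : 0 ≤ a) (hb : 0 ≤ b) (hM : 0 ≤ M) (φ : ℝ → ℝ) (hφ0 : ∀ t, 0 ≤ φ t)
    (hφM : ∀ t ∈ Set.Icc (0:ℝ) u, φ t ≤ M) (hφm : Measurable φ)
    (hineq : ∀ t ∈ Set.Icc (0:ℝ) u,
      φ t ≤ a + b * ∫ s in (0:ℝ)..t, (t - s) ^ (γ - 1) * φ s) :
    ∀ t ∈ Set.Icc (0:ℝ) u,
      φ t ≤ a * ∑' k : ℕ, (b * Real.Gamma γ) ^ k * t ^ ((k:ℝ) * γ) /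
        Real.Gamma ((k:ℝ) * γ + 1) := by
  set c : ℝ := b * Real.Gamma γ with hcdef
  have hΓγ : 0 < Real.Gamma γ := Real.Gamma_pos_of_pos hγ0
  have hc0 : 0 ≤ c := mul_nonneg hb hΓγ.le
  have hGpos : ∀ k : ℕ, 0 < Real.Gamma ((k:ℝ) * γ + 1) := fun k =>
    Real.Gamma_pos_of_pos (by positivity)
  -- the key induction
  have ind : ∀ n : ℕ, ∀ t ∈ Set.Icc (0:ℝ) u,
      φ t ≤ a * ∑ k ∈ Finset.range n, mlterm c γ k t + M * mlterm c γ n t := by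
    intro n
    induction n with
    | zero =>
      intro t ht
      simpa [mlterm_zero] using hφM t ht
    | succ n ih =>
      intro t ht
      obtain ⟨ht0, htu⟩ := ht
      -- the comparison function
      set F : ℝ → ℝ := fun s => a * ∑ k ∈ Finset.range n, mlterm c γ k s + M * mlterm c γ n s
        with hFdef
      have hF0 : ∀ s, 0 ≤ s → 0 ≤ F s := by
        intro s hs
        have h1 : 0 ≤ ∑ k ∈ Finset.range n, mlterm c γ k s :=
          Finset.sum_nonneg fun k _ => mlterm_nonneg c γ k s hc0 hs hγ0
        have h2 : 0 ≤ mlterm c γ n s := mlterm_nonneg c γ n s hc0 hs hγ0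
        positivity
      have hFmono : ∀ s, 0 ≤ s → s ≤ t → F s ≤ F t := by
        intro s hs hst
        apply add_le_add
        · exact mul_le_mul_of_nonneg_left (Finset.sum_le_sum fun k _ =>
            mlterm_mono c γ k s t hc0 hs hst hγ0) ha
        · exact mul_le_mul_of_nonneg_left (mlterm_mono c γ n s t hc0 hs hst hγ0) hM
      have hFm : Measurable F := by
        apply Measurable.add
        · exact (Finset.measurable_sum _ fun k _ => mlterm_measurable c γ k).const_mul a
        · exact (mlterm_measurable c γ n).const_mul M
      -- integrability
      have hIφ : IntervalIntegrable (fun s => (t-s) ^ (γ-1) * φ s) volume 0 t := by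
        apply intInt_mul γ t hγ0 ht0 φ hφm M
        intro s hs
        rw [abs_of_nonneg (hφ0 s)]
        exact hφM s ⟨hs.1, le_trans hs.2 htu⟩
      have hIF : IntervalIntegrable (fun s => (t-s) ^ (γ-1) * F s) volume 0 t := by
        apply intInt_mul γ t hγ0 ht0 F hFm (F t)
        intro s hs
        rw [abs_of_nonneg (hF0 s hs.1)]
        exact hFmono s hs.1 hs.2
      have hIk : ∀ k : ℕ, IntervalIntegrable
          (fun s => (t-s) ^ (γ-1) * s ^ ((k:ℝ) * γ)) volume 0 t := by
        intro k
        apply intInt_mul γ t hγ0 ht0 _ (measurable_id.pow_const _) (t ^ ((k:ℝ) * γ))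
        intro s hs
        simp only [id_eq]
        rw [abs_of_nonneg (Real.rpow_nonneg hs.1 _)]
        exact Real.rpow_le_rpow hs.1 hs.2 (by positivity)
      -- step 1 : monotonicity of the integral
      have step1 : (∫ s in (0:ℝ)..t, (t-s) ^ (γ-1) * φ s)
          ≤ ∫ s in (0:ℝ)..t, (t-s) ^ (γ-1) * F s := by
        apply intervalIntegral.integral_mono_on ht0 hIφ hIF
        intro s hs
        have hk : (0:ℝ) ≤ (t-s) ^ (γ-1) := Real.rpow_nonneg (by linarith [hs.2]) _
        exact mul_le_mul_of_nonneg_left (ih s ⟨hs.1, le_trans hs.2 htu⟩) hk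
      -- step 2 : computing the integral of the comparison function
      have hsplit : ∀ s : ℝ, (t-s) ^ (γ-1) * F s
          = (∑ k ∈ Finset.range n, (a * c ^ k / Real.Gamma ((k:ℝ)*γ+1)) *
              ((t-s) ^ (γ-1) * s ^ ((k:ℝ)*γ)))
            + (M * c ^ n / Real.Gamma ((n:ℝ)*γ+1)) * ((t-s) ^ (γ-1) * s ^ ((n:ℝ)*γ)) := by
        intro s
        simp only [hFdef, mlterm, mul_add, Finset.mul_sum]
        congr 1
        · apply Finset.sum_congr rfl
          intro k _
          ring
        · ring
      have step2 : (∫ s in (0:ℝ)..t, (t-s) ^ (γ-1) * F s)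
          = (∑ k ∈ Finset.range n, (a * c ^ k / Real.Gamma ((k:ℝ)*γ+1)) *
              ((Real.Gamma γ * Real.Gamma ((k:ℝ)*γ+1) / Real.Gamma (γ+(k:ℝ)*γ+1)) *
                t ^ (γ+(k:ℝ)*γ)))
            + (M * c ^ n / Real.Gamma ((n:ℝ)*γ+1)) *
              ((Real.Gamma γ * Real.Gamma ((n:ℝ)*γ+1) / Real.Gamma (γ+(n:ℝ)*γ+1)) *
                t ^ (γ+(n:ℝ)*γ)) := by
        rw [intervalIntegral.integral_congr (g := fun s =>
          (∑ k ∈ Finset.range n, (a * c ^ k / Real.Gamma ((k:ℝ)*γ+1)) *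
              ((t-s) ^ (γ-1) * s ^ ((k:ℝ)*γ)))
            + (M * c ^ n / Real.Gamma ((n:ℝ)*γ+1)) * ((t-s) ^ (γ-1) * s ^ ((n:ℝ)*γ)))
          (fun s _ => hsplit s)]
        have hIsum : IntervalIntegrable (fun x => ∑ k ∈ Finset.range n,
            (a * c ^ k / Real.Gamma ((k:ℝ)*γ+1)) * ((t-x) ^ (γ-1) * x ^ ((k:ℝ)*γ)))
            volume 0 t := by
          have h' := IntervalIntegrable.sum (Finset.range n)
            (f := fun k => fun x => (a * c ^ k / Real.Gamma ((k:ℝ)*γ+1)) *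
              ((t-x) ^ (γ-1) * x ^ ((k:ℝ)*γ)))
            (fun k _ => (hIk k).const_mul _)
          have e' : (fun x => ∑ k ∈ Finset.range n,
              (a * c ^ k / Real.Gamma ((k:ℝ)*γ+1)) * ((t-x) ^ (γ-1) * x ^ ((k:ℝ)*γ)))
              = ∑ k ∈ Finset.range n, fun x => (a * c ^ k / Real.Gamma ((k:ℝ)*γ+1)) *
                ((t-x) ^ (γ-1) * x ^ ((k:ℝ)*γ)) := by
            funext x
            simp
          rw [e']
          exact h'
        rw [intervalIntegral.integral_add hIsum ((hIk n).const_mul _)]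
        rw [intervalIntegral.integral_finset_sum (fun k _ => (hIk k).const_mul _)]
        congr 1
        · apply Finset.sum_congr rfl
          intro k _
          rw [intervalIntegral.integral_const_mul,
            J_formula γ ((k:ℝ)*γ) t hγ0 (by positivity) ht0]
        · rw [intervalIntegral.integral_const_mul,
            J_formula γ ((n:ℝ)*γ) t hγ0 (by positivity) ht0]
      -- per-term algebra
      have hterm : ∀ k : ℕ, b * ((a * c ^ k / Real.Gamma ((k:ℝ)*γ+1)) *
          ((Real.Gamma γ * Real.Gamma ((k:ℝ)*γ+1) / Real.Gamma (γ+(k:ℝ)*γ+1)) *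
            t ^ (γ+(k:ℝ)*γ)))
          = a * mlterm c γ (k+1) t := by
        intro k
        have e1 : ((k+1:ℕ):ℝ) * γ = γ + (k:ℝ)*γ := by push_cast; ring
        simp only [mlterm, e1]
        have h1 := (hGpos k).ne'
        have h2 : Real.Gamma (γ+(k:ℝ)*γ+1) ≠ 0 :=
          (Real.Gamma_pos_of_pos (by positivity)).ne'
        rw [pow_succ, hcdef]
        field_simp
      have htermM : b * ((M * c ^ n / Real.Gamma ((n:ℝ)*γ+1)) *
          ((Real.Gamma γ * Real.Gamma ((n:ℝ)*γ+1) / Real.Gamma (γ+(n:ℝ)*γ+1)) *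
            t ^ (γ+(n:ℝ)*γ)))
          = M * mlterm c γ (n+1) t := by
        have e1 : ((n+1:ℕ):ℝ) * γ = γ + (n:ℝ)*γ := by push_cast; ring
        simp only [mlterm, e1]
        have h1 := (hGpos n).ne'
        have h2 : Real.Gamma (γ+(n:ℝ)*γ+1) ≠ 0 :=
          (Real.Gamma_pos_of_pos (by positivity)).ne'
        rw [pow_succ, hcdef]
        field_simp
      -- put everything together
      have h1 := hineq t ⟨ht0, htu⟩
      calc φ t ≤ a + b * ∫ s in (0:ℝ)..t, (t-s) ^ (γ-1) * φ s := h1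
        _ ≤ a + b * ∫ s in (0:ℝ)..t, (t-s) ^ (γ-1) * F s := by
            exact add_le_add_right (mul_le_mul_of_nonneg_left step1 hb) a
        _ = a + (∑ k ∈ Finset.range n, a * mlterm c γ (k+1) t) + M * mlterm c γ (n+1) t := by
            rw [step2, mul_add, Finset.mul_sum, htermM]
            rw [show ∀ x y z : ℝ, x + (y + z) = x + y + z from fun x y z => by ring]
            congr 1
            congr 1
            apply Finset.sum_congr rfl
            intro k _
            exact hterm k
        _ = a * ∑ k ∈ Finset.range (n+1), mlterm c γ k t + M * mlterm c γ (n+1) t := by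
            rw [Finset.sum_range_succ', mlterm_zero, mul_add, mul_one, Finset.mul_sum]
            ring
  -- pass to the limit
  intro t ht
  obtain ⟨ht0, htu⟩ := ht
  have hsum : Summable (fun k : ℕ => mlterm c γ k t) := by
    have he : (fun k : ℕ => mlterm c γ k t)
        = fun k : ℕ => (c * t ^ γ) ^ k / Real.Gamma ((k:ℝ) * γ + 1) := by
      funext k
      have e : t ^ ((k:ℝ) * γ) = (t ^ γ) ^ k := by
        rw [mul_comm, Real.rpow_mul ht0, Real.rpow_natCast]
      rw [mlterm, e, ← mul_pow]
    rw [he]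
    exact summable_ml γ (c * t ^ γ) hγ0 (by positivity)
  have hlim : Filter.Tendsto
      (fun n => a * ∑ k ∈ Finset.range n, mlterm c γ k t + M * mlterm c γ n t)
      Filter.atTop (nhds (a * ∑' k : ℕ, mlterm c γ k t + M * 0)) := by
    exact ((hsum.hasSum.tendsto_sum_nat).const_mul a).add
      ((hsum.tendsto_atTop_zero).const_mul M)
  have := ge_of_tendsto hlim (Filter.Eventually.of_forall fun n => ind n t ⟨ht0, htu⟩)
  rw [mul_zero, add_zero] at this
  exact this

theorem singular_gronwall (β u a b : ℝ) (hβ : 1/2 < β) (hβ1 : β < 1)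
    (ha : 0 ≤ a) (hb : 0 ≤ b) (φ : ℝ → ℝ) (hφ0 : ∀ t, 0 ≤ φ t)
    (hφbd : ∃ M, ∀ t ∈ Set.Icc (0:ℝ) u, φ t ≤ M) (hφm : Measurable φ)
    (hineq : ∀ t ∈ Set.Icc (0:ℝ) u,
      φ t ≤ a + b * ∫ s in (0:ℝ)..t, (t - s) ^ ((2*β - 1) - 1) * φ s) :
    ∀ t ∈ Set.Icc (0:ℝ) u,
      φ t ≤ a * ∑' k : ℕ,
        (b * Real.Gamma (2*β - 1)) ^ k * t ^ ((k:ℝ) * (2*β - 1)) /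
          Real.Gamma ((k:ℝ) * (2*β - 1) + 1) := by

  obtain ⟨M, hM⟩ := hφbd
  exact gronwall_aux (2*β - 1) u a b (max M 0) (by linarith) (by linarith)
    ha hb (le_max_right _ _) φ hφ0
    (fun t ht => le_trans (hM t ht) (le_max_left _ _)) hφm hineq
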